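/- arXiv:1810.07935 — 2 statements merged into one kernel-verified Lean document; each statement's English description precedes it below -/
import Mathlib

section
/- Let 0 < α < 1, T > 0, N ≥ 3, and let t_j be the graded mesh (3.1). Then for 4 ≤ j ≤ N there exists a constant C independent of N such that the sum over 4 ≤ k ≤ ⌈j/2⌉ of α·(t_j − t_k)^{α−1}·(Δt_k)^3·t_{k-1}^{2α−2} is at most C·N^{-2}. -/
open Real

private lemma mvt_rpow {p x : ℝ} (hp : 1 ≤ p) (hx : 0 ≤ x) :
    (x + 1) ^ p - x ^ p ≤ p * (x + 1) ^ (p - 1) := by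
  obtain ⟨c, hc, hceq⟩ := exists_hasDerivAt_eq_slope (fun y => y ^ p)
    (fun y => p * y ^ (p - 1)) (by linarith : x < x + 1)
    (by
      apply Continuous.continuousOn
      exact continuous_iff_continuousAt.2 fun y =>
        Real.continuousAt_rpow_const y p (Or.inr (by linarith)))
    (fun y _ => Real.hasDerivAt_rpow_const (Or.inr hp))
  have hc0 : 0 ≤ c := le_of_lt (lt_of_le_of_lt hx hc.1)
  have h1 : p * c ^ (p - 1) ≤ p * (x + 1) ^ (p - 1) := by
    apply mul_le_mul_of_nonneg_left _ (by linarith)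
    exact Real.rpow_le_rpow hc0 (le_of_lt hc.2) (by linarith)
  have h2 : (x + 1) ^ p - x ^ p = p * c ^ (p - 1) := by
    rw [hceq]; ring
  linarith

set_option maxHeartbeats 1000000 in
theorem lemma43_first_sum (α T : ℝ) (hα0 : 0 < α) (hα1 : α < 1) (hT : 0 < T)
    (t : ℕ → ℕ → ℝ)
    (ht0 : ∀ N, t N 0 = 0)
    (ht1 : ∀ N, t N 1 = T * (N : ℝ) ^ (-(2 / α)))
    (ht2 : ∀ N, t N 2 = T * (N : ℝ) ^ (-(2 / α)) + T * (N : ℝ) ^ (-(3 / (2 * α))))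
    (htj : ∀ N j : ℕ, 3 ≤ j → j ≤ N →
      t N j = t N 2 + T * (1 - (N : ℝ) ^ (-(2 / α)) - (N : ℝ) ^ (-(3 / (2 * α)))) *
        (((j : ℝ) - 2) / ((N : ℝ) - 2)) ^ (1 / α)) :
    ∃ C > 0, ∀ N : ℕ, 3 ≤ N → ∀ j : ℕ, 4 ≤ j → j ≤ N →
      ∑ k ∈ Finset.Icc 4 ((j + 1) / 2),
          α * (t N j - t N k) ^ (α - 1) * (t N k - t N (k - 1)) ^ 3 *
            (t N (k - 1)) ^ (2 * α - 2)
        ≤ C * (N : ℝ) ^ (-2 : ℝ) := by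
  have hα0' : (0:ℝ) < α := hα0
  set g : ℝ := 1 / α with hg_def
  have hg1 : 1 ≤ g := by rw [hg_def, le_div_iff₀ hα0]; linarith
  have hg0 : 0 < g := by positivity
  set K : ℝ := α * (T / 4) ^ (α - 1) * (T * g) ^ 3 * (T / 2) ^ (2 * α - 2) with hK_def
  have hKpos : 0 < K := by rw [hK_def]; positivity
  set C2 : ℝ := K * (2 ^ (3 * g - 3) * 3 ^ (3 * g)) with hC2_def
  have hC2pos : 0 < C2 := by rw [hC2_def]; positivity
  clear_value K C2
  refine ⟨C2, hC2pos, ?_⟩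
  intro N hN j hj4 hjN
  set n : ℝ := (N : ℝ) with hn_def
  have hn3 : (3:ℝ) ≤ n := by rw [hn_def]; exact_mod_cast hN
  have hn0 : (0:ℝ) < n := by linarith
  clear_value n
  -- bounds on S
  set S : ℝ := 1 - n ^ (-(2 / α)) - n ^ (-(3 / (2 * α))) with hS_def
  have ha1 : n ^ (-(2 / α)) ≤ 1 / 9 := by
    have s1 : n ^ (-(2 / α)) ≤ (3:ℝ) ^ (-(2 / α)) :=
      Real.rpow_le_rpow_of_nonpos (by norm_num) hn3 (neg_nonpos.2 (by positivity))
    have s2 : (3:ℝ) ^ (-(2 / α)) ≤ (3:ℝ) ^ (-2 : ℝ) := by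
      apply Real.rpow_le_rpow_of_exponent_le (by norm_num)
      have : (2:ℝ) ≤ 2 / α := by rw [le_div_iff₀ hα0]; linarith
      linarith
    have s3 : (3:ℝ) ^ (-2 : ℝ) = 1 / 9 := by
      rw [show (-2:ℝ) = ((-2 : ℤ) : ℝ) by norm_num, Real.rpow_intCast]; norm_num
    linarith
  have ha2 : n ^ (-(3 / (2 * α))) ≤ 1 / 3 := by
    have s1 : n ^ (-(3 / (2 * α))) ≤ (3:ℝ) ^ (-(3 / (2 * α))) :=
      Real.rpow_le_rpow_of_nonpos (by norm_num) hn3 (neg_nonpos.2 (by positivity))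
    have s2 : (3:ℝ) ^ (-(3 / (2 * α))) ≤ (3:ℝ) ^ (-1 : ℝ) := by
      apply Real.rpow_le_rpow_of_exponent_le (by norm_num)
      have : (1:ℝ) ≤ 3 / (2 * α) := by rw [le_div_iff₀ (by linarith)]; linarith
      linarith
    have s3 : (3:ℝ) ^ (-1 : ℝ) = 1 / 3 := by
      rw [show (-1:ℝ) = ((-1 : ℤ) : ℝ) by norm_num, Real.rpow_intCast]; norm_num
    linarith
  have hS_half : 1 / 2 ≤ S := by rw [hS_def]; linarith
  have hS_one : S ≤ 1 := by
    rw [hS_def]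
    have p1 : 0 ≤ n ^ (-(2 / α)) := Real.rpow_nonneg (le_of_lt hn0) _
    have p2 : 0 ≤ n ^ (-(3 / (2 * α))) := Real.rpow_nonneg (le_of_lt hn0) _
    linarith
  clear_value S
  have hSpos : 0 < S := by linarith
  -- per-term bound
  have key : ∀ k ∈ Finset.Icc 4 ((j + 1) / 2),
      α * (t N j - t N k) ^ (α - 1) * (t N k - t N (k - 1)) ^ 3 *
        (t N (k - 1)) ^ (2 * α - 2) ≤ C2 * n ^ (-3 : ℝ) := by
    intro k hk
    rw [Finset.mem_Icc] at hk
    obtain ⟨hk4, hkle⟩ := hk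
    have h2k : 2 * k ≤ j + 1 := by
      have := (Nat.le_div_iff_mul_le (by norm_num : 0 < 2)).1 hkle
      omega
    have hj7 : 7 ≤ j := by omega
    have hkN : k ≤ N := by omega
    have hk1N : k - 1 ≤ N := by omega
    have hu5 : (5:ℝ) ≤ (j:ℝ) - 2 := by
      have : (7:ℝ) ≤ (j:ℝ) := by exact_mod_cast hj7
      linarith
    have hw1 : (1:ℝ) ≤ (k:ℝ) - 3 := by
      have : (4:ℝ) ≤ (k:ℝ) := by exact_mod_cast hk4
      linarith
    set u : ℝ := (j : ℝ) - 2 with hu_def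
    set v : ℝ := (k : ℝ) - 2 with hv_def
    set w : ℝ := (k : ℝ) - 3 with hw_def
    set m : ℝ := n - 2 with hm_def
    have hvw : v = w + 1 := by rw [hv_def, hw_def]; ring
    have hvu : 2 * v ≤ u := by
      have : ((2 * k : ℕ) : ℝ) ≤ ((j + 1 : ℕ) : ℝ) := by exact_mod_cast h2k
      push_cast at this
      rw [hv_def, hu_def]; linarith
    have hm1 : (1:ℝ) ≤ m := by rw [hm_def]; linarith
    have hum : u ≤ m := by
      have : (j:ℝ) ≤ n := by rw [hn_def]; exact_mod_cast hjN
      rw [hu_def, hm_def]; linarith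
    have hn3m : n ≤ 3 * m := by rw [hm_def]; linarith
    have hmn : m ≤ n := by rw [hm_def]; linarith
    -- formulas
    have h_tj : t N j = t N 2 + T * S * (u / m) ^ g := by
      rw [htj N j (by omega) hjN, hu_def, hm_def, hS_def, hn_def]
    have h_tk : t N k = t N 2 + T * S * (v / m) ^ g := by
      rw [htj N k (by omega) hkN, hv_def, hm_def, hS_def, hn_def]
    have h_tk1 : t N (k - 1) = t N 2 + T * S * (w / m) ^ g := by
      rw [htj N (k - 1) (by omega) hk1N, hw_def, hm_def, hS_def, hn_def]
      have hc : ((k - 1 : ℕ) : ℝ) = (k : ℝ) - 1 := by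
        rw [Nat.cast_sub (by omega)]; norm_num
      rw [hc]
      ring_nf
    clear_value u v w m
    have hwu : w ≤ u := by linarith
    have hu0 : (0:ℝ) < u := by linarith
    have hv0 : (0:ℝ) < v := by linarith
    have hw0 : (0:ℝ) < w := by linarith
    have hm0 : (0:ℝ) < m := by linarith
    have ht2nn : 0 ≤ t N 2 := by
      rw [ht2, ← hn_def]
      have p1 : 0 ≤ T * n ^ (-(2 / α)) := by positivity
      have p2 : 0 ≤ T * n ^ (-(3 / (2 * α))) := by positivity
      linarith
    -- gap lower bound
    have hgapeq : t N j - t N k = T * S * ((u / m) ^ g - (v / m) ^ g) := by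
      rw [h_tj, h_tk]; ring
    have hum0 : (0:ℝ) ≤ u / m := by positivity
    have hvm0 : (0:ℝ) ≤ v / m := by positivity
    have hhalf : (v / m) ^ g ≤ 1 / 2 * (u / m) ^ g := by
      have h1 : v / m ≤ u / m * (1 / 2) := by
        rw [div_mul_eq_mul_div]
        exact (div_le_div_iff_of_pos_right hm0).2 (by linarith)
      calc (v / m) ^ g ≤ (u / m * (1 / 2)) ^ g :=
            Real.rpow_le_rpow hvm0 h1 (le_of_lt hg0)
        _ = (u / m) ^ g * (1 / 2) ^ g := Real.mul_rpow hum0 (by norm_num)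
        _ ≤ (u / m) ^ g * (1 / 2) := by
            have h2 : ((1:ℝ) / 2) ^ g ≤ ((1:ℝ) / 2) ^ (1 : ℝ) :=
              Real.rpow_le_rpow_of_exponent_ge (by norm_num) (by norm_num) hg1
            rw [Real.rpow_one] at h2
            exact mul_le_mul_of_nonneg_left h2 (Real.rpow_nonneg hum0 g)
        _ = 1 / 2 * (u / m) ^ g := by ring
    have hun0 : (0:ℝ) ≤ u / n := by positivity
    have he2 : (u / n) ^ g ≤ (u / m) ^ g := by
      apply Real.rpow_le_rpow hun0 _ (le_of_lt hg0)
      rw [div_le_div_iff₀ hn0 hm0]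
      exact mul_le_mul_of_nonneg_left hmn (le_of_lt hu0)
    have hgap_lb : T / 4 * (u / n) ^ g ≤ t N j - t N k := by
      rw [hgapeq]
      have hpw : 0 ≤ (u / m) ^ g := Real.rpow_nonneg hum0 g
      have h3 : 1 / 2 * (u / m) ^ g ≤ (u / m) ^ g - (v / m) ^ g := by linarith
      have h4 : T * S * (1 / 2 * (u / m) ^ g) ≤ T * S * ((u / m) ^ g - (v / m) ^ g) :=
        mul_le_mul_of_nonneg_left h3 (by positivity)
      have h5 : T / 4 * (u / m) ^ g ≤ T * S * (1 / 2 * (u / m) ^ g) := by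
        have h5a : (T * (u / m) ^ g) * (1/2) ≤ (T * (u / m) ^ g) * S :=
          mul_le_mul_of_nonneg_left hS_half (mul_nonneg (le_of_lt hT) hpw)
        linarith
      have h6 : T / 4 * (u / n) ^ g ≤ T / 4 * (u / m) ^ g :=
        mul_le_mul_of_nonneg_left he2 (by positivity)
      linarith
    have hGpos : 0 < T / 4 * (u / n) ^ g := by positivity
    have hgap_pos : 0 < t N j - t N k := lt_of_lt_of_le hGpos hgap_lb
    have hA : (t N j - t N k) ^ (α - 1) ≤ (T / 4 * (u / n) ^ g) ^ (α - 1) :=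
      Real.rpow_le_rpow_of_nonpos hGpos hgap_lb (by linarith)
    -- delta
    have hdeleq : t N k - t N (k - 1) = T * S * ((v / m) ^ g - (w / m) ^ g) := by
      rw [h_tk, h_tk1]; ring
    have hwm0 : (0:ℝ) ≤ w / m := by positivity
    have hwm_le : (w / m) ^ g ≤ (v / m) ^ g := by
      apply Real.rpow_le_rpow hwm0 _ (le_of_lt hg0)
      exact (div_le_div_iff_of_pos_right hm0).2 (by linarith)
    have hdel_nonneg : 0 ≤ t N k - t N (k - 1) := by
      rw [hdeleq]
      exact mul_nonneg (by positivity) (by linarith)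
    have hdel_ub : t N k - t N (k - 1) ≤ T * g * v ^ (g - 1) * (3 / n) ^ g := by
      rw [hdeleq]
      have e1 : (v / m) ^ g - (w / m) ^ g = (v ^ g - w ^ g) / m ^ g := by
        rw [Real.div_rpow (le_of_lt hv0) (le_of_lt hm0),
            Real.div_rpow (le_of_lt hw0) (le_of_lt hm0)]
        ring
      have e2 : v ^ g - w ^ g ≤ g * v ^ (g - 1) := by
        have h := mvt_rpow hg1 (le_of_lt hw0)
        rw [hvw]
        exact h
      have e3 : (1:ℝ) / m ^ g ≤ (3 / n) ^ g := by
        have h1 : (1:ℝ) / m ≤ 3 / n := by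
          rw [div_le_div_iff₀ hm0 hn0]; linarith
        calc (1:ℝ) / m ^ g = (1 / m) ^ g := by
              rw [Real.div_rpow (by norm_num) (le_of_lt hm0), Real.one_rpow]
          _ ≤ (3 / n) ^ g := Real.rpow_le_rpow (by positivity) h1 (le_of_lt hg0)
      have hvg1 : (0:ℝ) ≤ v ^ (g - 1) := Real.rpow_nonneg (le_of_lt hv0) _
      have hgap2 : (v / m) ^ g - (w / m) ^ g ≤ g * v ^ (g - 1) * (3 / n) ^ g := by
        rw [e1]
        calc (v ^ g - w ^ g) / m ^ g ≤ (g * v ^ (g - 1)) / m ^ g :=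
              (div_le_div_iff_of_pos_right (Real.rpow_pos_of_pos hm0 g)).2 e2
          _ = (g * v ^ (g - 1)) * (1 / m ^ g) := by ring
          _ ≤ (g * v ^ (g - 1)) * ((3 / n) ^ g) :=
              mul_le_mul_of_nonneg_left e3 (by positivity)
          _ = g * v ^ (g - 1) * (3 / n) ^ g := by ring
      have hx0 : 0 ≤ (v / m) ^ g - (w / m) ^ g := by linarith
      calc T * S * ((v / m) ^ g - (w / m) ^ g) ≤ T * ((v / m) ^ g - (w / m) ^ g) := by
            have hx1 : (T * ((v / m) ^ g - (w / m) ^ g)) * S ≤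
                (T * ((v / m) ^ g - (w / m) ^ g)) * 1 :=
              mul_le_mul_of_nonneg_left hS_one (mul_nonneg (le_of_lt hT) hx0)
            linarith
        _ ≤ T * (g * v ^ (g - 1) * (3 / n) ^ g) :=
            mul_le_mul_of_nonneg_left hgap2 (le_of_lt hT)
        _ = T * g * v ^ (g - 1) * (3 / n) ^ g := by ring
    have hB : (t N k - t N (k - 1)) ^ 3 ≤ (T * g * v ^ (g - 1) * (3 / n) ^ g) ^ 3 :=
      pow_le_pow_left₀ hdel_nonneg hdel_ub 3
    -- t_{k-1} lower bound
    have hwn0 : (0:ℝ) ≤ w / n := by positivity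
    have hH_e2 : (w / n) ^ g ≤ (w / m) ^ g := by
      apply Real.rpow_le_rpow hwn0 _ (le_of_lt hg0)
      rw [div_le_div_iff₀ hn0 hm0]
      exact mul_le_mul_of_nonneg_left hmn (le_of_lt hw0)
    have hH_lb : T / 2 * (w / n) ^ g ≤ t N (k - 1) := by
      rw [h_tk1]
      have hpw : 0 ≤ (w / m) ^ g := Real.rpow_nonneg hwm0 g
      have q1 : T / 2 * (w / n) ^ g ≤ T / 2 * (w / m) ^ g :=
        mul_le_mul_of_nonneg_left hH_e2 (by positivity)
      have q2 : T / 2 * (w / m) ^ g ≤ T * S * (w / m) ^ g := by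
        have q2a : (T * (w / m) ^ g) * (1/2) ≤ (T * (w / m) ^ g) * S :=
          mul_le_mul_of_nonneg_left hS_half (mul_nonneg (le_of_lt hT) hpw)
        linarith
      linarith
    have hHpos : 0 < T / 2 * (w / n) ^ g := by positivity
    have htk1_pos : 0 < t N (k - 1) := lt_of_lt_of_le hHpos hH_lb
    have hD : (t N (k - 1)) ^ (2 * α - 2) ≤ (T / 2 * (w / n) ^ g) ^ (2 * α - 2) :=
      Real.rpow_le_rpow_of_nonpos hHpos hH_lb (by linarith)
    -- combine
    have hcomb : α * (t N j - t N k) ^ (α - 1) * (t N k - t N (k - 1)) ^ 3 *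
        (t N (k - 1)) ^ (2 * α - 2) ≤
        α * (T / 4 * (u / n) ^ g) ^ (α - 1) * (T * g * v ^ (g - 1) * (3 / n) ^ g) ^ 3 *
          (T / 2 * (w / n) ^ g) ^ (2 * α - 2) := by
      have m1 : α * (t N j - t N k) ^ (α - 1) ≤ α * (T / 4 * (u / n) ^ g) ^ (α - 1) :=
        mul_le_mul_of_nonneg_left hA (le_of_lt hα0)
      have m2 : α * (t N j - t N k) ^ (α - 1) * (t N k - t N (k - 1)) ^ 3 ≤
          α * (T / 4 * (u / n) ^ g) ^ (α - 1) * (T * g * v ^ (g - 1) * (3 / n) ^ g) ^ 3 :=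
        mul_le_mul m1 hB (pow_nonneg hdel_nonneg 3)
          (by positivity)
      exact mul_le_mul m2 hD (Real.rpow_nonneg (le_of_lt htk1_pos) _) (by positivity)
    refine le_trans hcomb ?_
    -- expansions
    have eA : (T / 4 * (u / n) ^ g) ^ (α - 1) = (T / 4) ^ (α - 1) * (u / n) ^ (1 - g) := by
      rw [Real.mul_rpow (by positivity) (Real.rpow_nonneg hun0 g), ← Real.rpow_mul hun0]
      congr 1
      rw [hg_def]; field_simp
    have eB : (T * g * v ^ (g - 1) * (3 / n) ^ g) ^ 3 =
        (T * g) ^ 3 * v ^ (3 * g - 3) * (3 / n) ^ (3 * g) := by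
      rw [mul_pow, mul_pow, ← Real.rpow_natCast (v ^ (g - 1)) 3,
        ← Real.rpow_natCast ((3 / n) ^ g) 3, ← Real.rpow_mul (le_of_lt hv0),
        ← Real.rpow_mul (by positivity : (0:ℝ) ≤ 3 / n)]
      congr 2 <;> push_cast <;> ring
    have eD : (T / 2 * (w / n) ^ g) ^ (2 * α - 2) =
        (T / 2) ^ (2 * α - 2) * (w / n) ^ (2 - 2 * g) := by
      rw [Real.mul_rpow (by positivity) (Real.rpow_nonneg hwn0 g), ← Real.rpow_mul hwn0]
      congr 1
      rw [hg_def]; field_simp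
    rw [eA, eB, eD]
    -- core variable inequality
    have key2 : u ^ (1 - g) * v ^ (3 * g - 3) * w ^ (2 - 2 * g) ≤ 2 ^ (3 * g - 3) := by
      have h1 : v ^ (3 * g - 3) ≤ (2 * w) ^ (3 * g - 3) :=
        Real.rpow_le_rpow (le_of_lt hv0) (by linarith) (by linarith)
      have h2 : ((2:ℝ) * w) ^ (3 * g - 3) = 2 ^ (3 * g - 3) * w ^ (3 * g - 3) :=
        Real.mul_rpow (by norm_num) (le_of_lt hw0)
      have hug : (0:ℝ) ≤ u ^ (1 - g) := Real.rpow_nonneg (le_of_lt hu0) _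
      have hwg : (0:ℝ) ≤ w ^ (2 - 2 * g) := Real.rpow_nonneg (le_of_lt hw0) _
      calc u ^ (1 - g) * v ^ (3 * g - 3) * w ^ (2 - 2 * g)
          ≤ u ^ (1 - g) * (2 ^ (3 * g - 3) * w ^ (3 * g - 3)) * w ^ (2 - 2 * g) := by
            apply mul_le_mul_of_nonneg_right _ hwg
            exact mul_le_mul_of_nonneg_left (h1.trans_eq h2) hug
        _ = 2 ^ (3 * g - 3) * (u ^ (1 - g) * (w ^ (3 * g - 3) * w ^ (2 - 2 * g))) := by ring
        _ = 2 ^ (3 * g - 3) * (u ^ (1 - g) * w ^ (g - 1)) := by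
            rw [← Real.rpow_add hw0, show 3 * g - 3 + (2 - 2 * g) = g - 1 by ring]
        _ ≤ 2 ^ (3 * g - 3) * (u ^ (1 - g) * u ^ (g - 1)) := by
            apply mul_le_mul_of_nonneg_left _ (Real.rpow_nonneg (by norm_num) _)
            exact mul_le_mul_of_nonneg_left
              (Real.rpow_le_rpow (le_of_lt hw0) hwu (by linarith)) hug
        _ = 2 ^ (3 * g - 3) := by
            rw [← Real.rpow_add hu0, show 1 - g + (g - 1) = 0 by ring, Real.rpow_zero,
              mul_one]
    have core : (u / n) ^ (1 - g) * v ^ (3 * g - 3) * (3 / n) ^ (3 * g) *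
        (w / n) ^ (2 - 2 * g) ≤ 2 ^ (3 * g - 3) * 3 ^ (3 * g) * n ^ (-3 : ℝ) := by
      have d1 : (u / n) ^ (1 - g) = u ^ (1 - g) / n ^ (1 - g) :=
        Real.div_rpow (le_of_lt hu0) (le_of_lt hn0) _
      have d2 : ((3:ℝ) / n) ^ (3 * g) = 3 ^ (3 * g) / n ^ (3 * g) :=
        Real.div_rpow (by norm_num) (le_of_lt hn0) _
      have d3 : (w / n) ^ (2 - 2 * g) = w ^ (2 - 2 * g) / n ^ (2 - 2 * g) :=
        Real.div_rpow (le_of_lt hw0) (le_of_lt hn0) _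
      have dn : n ^ (1 - g) * n ^ (3 * g) * n ^ (2 - 2 * g) = n ^ (3 : ℝ) := by
        rw [← Real.rpow_add hn0, ← Real.rpow_add hn0]
        congr 1; ring
      rw [d1, d2, d3]
      have eqX : u ^ (1 - g) / n ^ (1 - g) * v ^ (3 * g - 3) *
          (3 ^ (3 * g) / n ^ (3 * g)) * (w ^ (2 - 2 * g) / n ^ (2 - 2 * g)) =
          (u ^ (1 - g) * v ^ (3 * g - 3) * w ^ (2 - 2 * g)) * 3 ^ (3 * g) /
            (n ^ (1 - g) * n ^ (3 * g) * n ^ (2 - 2 * g)) := by ring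
      rw [eqX, dn,
        show (2:ℝ) ^ (3 * g - 3) * 3 ^ (3 * g) * n ^ (-3 : ℝ) =
            (2 ^ (3 * g - 3) * 3 ^ (3 * g)) / n ^ (3 : ℝ) by
          rw [Real.rpow_neg (le_of_lt hn0)]; ring]
      exact (div_le_div_iff_of_pos_right (Real.rpow_pos_of_pos hn0 3)).2
        (mul_le_mul_of_nonneg_right key2 (Real.rpow_nonneg (by norm_num) _))
    calc α * ((T / 4) ^ (α - 1) * (u / n) ^ (1 - g)) *
          ((T * g) ^ 3 * v ^ (3 * g - 3) * (3 / n) ^ (3 * g)) *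
          ((T / 2) ^ (2 * α - 2) * (w / n) ^ (2 - 2 * g))
        = K * ((u / n) ^ (1 - g) * v ^ (3 * g - 3) * (3 / n) ^ (3 * g) *
            (w / n) ^ (2 - 2 * g)) := by rw [hK_def]; ring
      _ ≤ K * (2 ^ (3 * g - 3) * 3 ^ (3 * g) * n ^ (-3 : ℝ)) :=
          mul_le_mul_of_nonneg_left core (le_of_lt hKpos)
      _ = C2 * n ^ (-3 : ℝ) := by rw [hC2_def]; ring
  -- sum up
  have hsum := Finset.sum_le_card_nsmul _ _ _ key
  rw [nsmul_eq_mul] at hsum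
  refine le_trans hsum ?_
  have hcard : ((Finset.Icc 4 ((j + 1) / 2)).card : ℝ) ≤ n := by
    rw [Nat.card_Icc, hn_def]
    have : (j + 1) / 2 + 1 - 4 ≤ N := by omega
    exact_mod_cast this
  have hb : (0:ℝ) ≤ C2 * n ^ (-3 : ℝ) := by positivity
  calc ((Finset.Icc 4 ((j + 1) / 2)).card : ℝ) * (C2 * n ^ (-3 : ℝ))
      ≤ n * (C2 * n ^ (-3 : ℝ)) := mul_le_mul_of_nonneg_right hcard hb
    _ = C2 * (n ^ (1:ℝ) * n ^ (-3 : ℝ)) := by rw [Real.rpow_one]; ring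
    _ = C2 * n ^ (-2 : ℝ) := by
        rw [← Real.rpow_add hn0]; norm_num
end

section
/- Let 0 < α < 1 and let 0 = t_0 < t_1 < ⋯ < t_j. Define q_k = (1/Γ(α+2))·{ (1/Δt_k)[(t_j − t_{k-1})^{α+1} − (t_j − t_k)^{α+1}] − (1/Δt_{k+1})[(t_j − t_k)^{α+1} − (t_j − t_{k+1})^{α+1}] } for 1 ≤ k ≤ j−1, where Δt_k = t_k − t_{k-1}. Then each q_k ≥ 0, and Σ_{k=1}^{j−1} q_k = (1/Γ(α+1))·[(t_j − μ_1)^α − (t_j − μ_j)^α] for some points μ_k ∈ (t_{k-1}, t_k); in particular Σ_{k=1}^{j−1} q_k ≤ t_j^α / Γ(α+1). -/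
lemma mvt_rpow_step (α : ℝ) (hα0 : 0 < α) (c a b : ℝ) (hab : a < b) :
    ∃ μ ∈ Set.Ioo a b,
      (1 / (b - a)) * ((c - a) ^ (α + 1) - (c - b) ^ (α + 1)) = (α + 1) * (c - μ) ^ α := by
  have hderiv : ∀ x ∈ Set.Ioo a b,
      HasDerivAt (fun x : ℝ => (c - x) ^ (α + 1))
        (-((α + 1) * (c - x) ^ α)) x := by
    intro x _
    have h1 : HasDerivAt (fun x : ℝ => c - x) (-1) x := by
      simpa using (hasDerivAt_id x).const_sub c
    have h2 := h1.rpow_const (p := α + 1) (Or.inr (by linarith))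
    have : (-1 : ℝ) * (α + 1) * (c - x) ^ (α + 1 - 1) = -((α + 1) * (c - x) ^ α) := by
      ring_nf
    rwa [this] at h2
  have hcont : ContinuousOn (fun x : ℝ => (c - x) ^ (α + 1)) (Set.Icc a b) :=
    ((continuous_const.sub continuous_id).rpow_const
      (fun x => Or.inr (by linarith))).continuousOn
  obtain ⟨μ, hμ, heq⟩ := exists_hasDerivAt_eq_slope (fun x : ℝ => (c - x) ^ (α + 1))
    (fun x => -((α + 1) * (c - x) ^ α)) hab hcont hderiv
  refine ⟨μ, hμ, ?_⟩
  have hba : b - a ≠ 0 := by linarith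
  field_simp at heq ⊢
  linarith

theorem quadrature_weights_telescope (α : ℝ) (hα0 : 0 < α) (hα1 : α < 1)
    (j : ℕ) (hj : 2 ≤ j) (t : ℕ → ℝ) (ht0 : t 0 = 0)
    (hmono : ∀ k : ℕ, 1 ≤ k → k ≤ j → t (k - 1) < t k)
    (q : ℕ → ℝ)
    (hq : ∀ k : ℕ, 1 ≤ k → k ≤ j - 1 →
      q k = (1 / Real.Gamma (α + 2)) *
        ((1 / (t k - t (k - 1))) * ((t j - t (k - 1)) ^ (α + 1) - (t j - t k) ^ (α + 1)) -
         (1 / (t (k + 1) - t k)) * ((t j - t k) ^ (α + 1) - (t j - t (k + 1)) ^ (α + 1)))) :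
    (∀ k : ℕ, 1 ≤ k → k ≤ j - 1 → 0 ≤ q k) ∧
    ∃ μ : ℕ → ℝ, (∀ k : ℕ, 1 ≤ k → k ≤ j → μ k ∈ Set.Ioo (t (k - 1)) (t k)) ∧
      ∑ k ∈ Finset.Icc 1 (j - 1), q k =
        (1 / Real.Gamma (α + 1)) * ((t j - μ 1) ^ α - (t j - μ j) ^ α) ∧
      ∑ k ∈ Finset.Icc 1 (j - 1), q k ≤ t j ^ α / Real.Gamma (α + 1) := by
  classical
  have hΓ1 : 0 < Real.Gamma (α + 1) := Real.Gamma_pos_of_pos (by linarith)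
  have hΓ2 : Real.Gamma (α + 2) = (α + 1) * Real.Gamma (α + 1) := by
    have h := Real.Gamma_add_one (s := α + 1) (by positivity)
    rw [show α + 2 = α + 1 + 1 by ring]
    exact h
  have hΓ2pos : 0 < Real.Gamma (α + 2) := by rw [hΓ2]; positivity
  -- monotonicity of t
  have hle : ∀ b : ℕ, b ≤ j → ∀ a : ℕ, a ≤ b → t a ≤ t b := by
    intro b
    induction b with
    | zero => intro _ a ha; rw [Nat.le_zero.mp ha]
    | succ n ih =>
      intro hb a ha
      rcases Nat.eq_or_lt_of_le ha with h | h
      · rw [h]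
      · have h1 : a ≤ n := by omega
        have h2 : t n < t (n + 1) := by
          have := hmono (n + 1) (by omega) hb
          simpa using this
        exact le_trans (ih (by omega) a h1) h2.le
  -- MVT point for each subinterval
  have hmu : ∀ k : ℕ, 1 ≤ k → k ≤ j →
      ∃ μ ∈ Set.Ioo (t (k - 1)) (t k),
        (1 / (t k - t (k - 1))) * ((t j - t (k - 1)) ^ (α + 1) - (t j - t k) ^ (α + 1))
          = (α + 1) * (t j - μ) ^ α :=
    fun k h1 h2 => mvt_rpow_step α hα0 (t j) (t (k - 1)) (t k) (hmono k h1 h2)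
  choose! f hf1 hf2 using hmu
  set μ : ℕ → ℝ := f with hμdef
  have hμmem : ∀ k : ℕ, 1 ≤ k → k ≤ j → μ k ∈ Set.Ioo (t (k - 1)) (t k) := hf1
  have hμeq : ∀ k : ℕ, 1 ≤ k → k ≤ j →
      (1 / (t k - t (k - 1))) * ((t j - t (k - 1)) ^ (α + 1) - (t j - t k) ^ (α + 1))
        = (α + 1) * (t j - μ k) ^ α := hf2
  set G : ℕ → ℝ := fun k => (1 / Real.Gamma (α + 1)) * (t j - μ k) ^ α with hGdef
  have hGeq : ∀ k : ℕ, 1 ≤ k → k ≤ j →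
      (1 / (t k - t (k - 1))) * ((t j - t (k - 1)) ^ (α + 1) - (t j - t k) ^ (α + 1))
        = Real.Gamma (α + 2) * G k := by
    intro k h1 h2
    rw [hμeq k h1 h2, hΓ2, hGdef]
    field_simp
  have hqG : ∀ k : ℕ, 1 ≤ k → k ≤ j - 1 → q k = G k - G (k + 1) := by
    intro k h1 h2
    have hk1j : k + 1 ≤ j := by omega
    have hG2 := hGeq (k + 1) (by omega) hk1j
    simp only [Nat.add_sub_cancel] at hG2
    rw [hq k h1 h2, hGeq k h1 (by omega), hG2]
    have hΓne : Real.Gamma (α + 2) ≠ 0 := ne_of_gt hΓ2pos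
    field_simp
  -- key monotone fact: consecutive G values decrease
  have hGmono : ∀ k : ℕ, 1 ≤ k → k ≤ j - 1 → G (k + 1) ≤ G k := by
    intro k h1 h2
    have m1 := hμmem k h1 (by omega)
    have m2 := hμmem (k + 1) (by omega) (by omega)
    simp only [Nat.add_sub_cancel] at m2
    have htk1j : t (k + 1) ≤ t j := hle j le_rfl (k + 1) (by omega)
    have hμ2 : 0 ≤ t j - μ (k + 1) := by
      have := m2.2
      linarith
    have hμ12 : t j - μ (k + 1) ≤ t j - μ k := by
      have := m1.2
      have := m2.1
      linarith
    have hrp : (t j - μ (k + 1)) ^ α ≤ (t j - μ k) ^ α :=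
      Real.rpow_le_rpow hμ2 hμ12 hα0.le
    have hc : (0 : ℝ) ≤ 1 / Real.Gamma (α + 1) := by positivity
    simp only [hGdef]
    exact mul_le_mul_of_nonneg_left hrp hc
  have hnonneg : ∀ k : ℕ, 1 ≤ k → k ≤ j - 1 → 0 ≤ q k := by
    intro k h1 h2
    rw [hqG k h1 h2]
    have := hGmono k h1 h2
    linarith
  refine ⟨hnonneg, μ, hμmem, ?_, ?_⟩
  · -- telescoping sum
    have hsum : ∑ k ∈ Finset.Icc 1 (j - 1), q k = G 1 - G j := by
      rw [Finset.sum_congr rfl (fun k hk => by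
        have h := Finset.mem_Icc.mp hk
        exact hqG k h.1 h.2)]
      rw [show Finset.Icc 1 (j - 1) = Finset.Ico 1 j by
        rw [← Finset.Ico_add_one_right_eq_Icc]; congr 1; omega]
      rw [Finset.sum_Ico_eq_sum_range]
      have h := Finset.sum_range_sub' (fun i => G (1 + i)) (j - 1)
      have hj' : 1 + (j - 1) = j := by omega
      simpa [hj', add_assoc] using h
    rw [hsum, hGdef]
    ring
  · -- the bound
    have hsum : ∑ k ∈ Finset.Icc 1 (j - 1), q k = G 1 - G j := by
      rw [Finset.sum_congr rfl (fun k hk => by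
        have h := Finset.mem_Icc.mp hk
        exact hqG k h.1 h.2)]
      rw [show Finset.Icc 1 (j - 1) = Finset.Ico 1 j by
        rw [← Finset.Ico_add_one_right_eq_Icc]; congr 1; omega]
      rw [Finset.sum_Ico_eq_sum_range]
      have h := Finset.sum_range_sub' (fun i => G (1 + i)) (j - 1)
      have hj' : 1 + (j - 1) = j := by omega
      simpa [hj', add_assoc] using h
    rw [hsum]
    have m1 := hμmem 1 le_rfl (by omega)
    have mj := hμmem j (by omega) le_rfl
    simp only [Nat.sub_self, ht0] at m1
    have hμ1pos : 0 < μ 1 := m1.1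
    have ht1j : t 1 ≤ t j := hle j le_rfl 1 (by omega)
    have hA : (t j - μ 1) ^ α ≤ t j ^ α :=
      Real.rpow_le_rpow (by linarith [m1.2]) (by linarith) hα0.le
    have hB : 0 ≤ (t j - μ j) ^ α := Real.rpow_nonneg (by linarith [mj.2]) α
    have hc : (0 : ℝ) < 1 / Real.Gamma (α + 1) := by positivity
    have h1 : G 1 ≤ (1 / Real.Gamma (α + 1)) * t j ^ α := by
      simp only [hGdef]
      exact mul_le_mul_of_nonneg_left hA hc.le
    have h2 : 0 ≤ G j := by
      simp only [hGdef]
      positivity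
    have : (1 / Real.Gamma (α + 1)) * t j ^ α = t j ^ α / Real.Gamma (α + 1) := by ring
    linarith
end
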